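/- Let T be a tree decomposition of graph G obtained by minimum-degree vertex elimination, where each vertex v has bag X(v) = {v} ∪ X(v).N with X(v).N the neighbors of v at contraction time, and the parent of X(v) is the lowest-ranked vertex of X(v).N. Then for every vertex v, X(v).N is a subset of the ancestors of v in T, and X(v).N separates v (together with its descendants in T) from all other vertices of G: every path from a descendant of v (including v) to a non-descendant passes through X(v).N. -/

import Mathlib

/-- Separator property of elimination-based tree decompositions: if vertices are contracted
in increasing rank order (with `N v` the neighbor set of `v` at contraction time, satisfying
the original-edge and fill-in properties) and the parent of `X(v)` is the lowest-ranked
vertex of `N v`, then for every vertex `v`: (1) `N v` is a subset of the ancestors of `v`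
in the tree, and (2) `N v` separates `v` together with its descendants from all other
vertices of `G`: every path from a descendant of `v` (including `v`) to a non-descendant
passes through `N v`. -/
theorem elimination_tree_neighbors_are_ancestors_and_separate
    {V : Type*} [DecidableEq V] (adj : V → V → Prop) (r : V → ℕ)
    (hinj : Function.Injective r)
    (hadjsymm : ∀ u x, adj u x → adj x u)
    (N : V → Finset V) (root : V) (parent : V → V)
    -- contraction-time neighbors have higher rank
    (hup : ∀ v, ∀ u ∈ N v, r v < r u)
    -- original edges: a neighbor of higher rank is a contraction-time neighbor
    (horig : ∀ u x, adj u x → r u < r x → x ∈ N u)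
    -- fill-in edges created by contracting `v` among its neighbors
    (hfill : ∀ v, ∀ u ∈ N v, ∀ x ∈ N v, u ≠ x → r u < r x → x ∈ N u)
    -- the root is the last contracted vertex and has no contraction-time neighbors
    (hroot : N root = ∅)
    -- the parent of `v` is the lowest-ranked vertex of `N v`
    (hparent : ∀ v, v ≠ root → parent v ∈ N v ∧ ∀ u ∈ N v, r (parent v) ≤ r u) :
    (∀ v, ∀ u ∈ N v,
      Relation.TransGen (fun a b => a ≠ root ∧ b = parent a) v u) ∧
    (∀ v s t (p : List V),
      (s = v ∨ Relation.TransGen (fun a b => a ≠ root ∧ b = parent a) s v) →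
      ¬ (t = v ∨ Relation.TransGen (fun a b => a ≠ root ∧ b = parent a) t v) →
      List.Chain' adj (s :: p ++ [t]) →
      ∃ b ∈ s :: p ++ [t], b ∈ N v) := by
  classical
  set step := fun a b => a ≠ root ∧ b = parent a with hstep
  -- v ≠ root whenever N v is nonempty
  have hne : ∀ v u, u ∈ N v → v ≠ root := by
    intro v u hu hvr
    rw [hvr, hroot] at hu
    exact absurd hu (Finset.notMem_empty u)
  -- Part 1: neighbors are ancestors
  have anc : ∀ n v u, u ∈ N v → r u - r v = n → Relation.TransGen step v u := by
    intro n
    induction n using Nat.strong_induction_on with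
    | _ n ih =>
      intro v u hu hn
      have hvr : v ≠ root := hne v u hu
      obtain ⟨hp, hmin⟩ := hparent v hvr
      by_cases hup' : u = parent v
      · exact Relation.TransGen.single ⟨hvr, hup'.symm ▸ rfl⟩
      · have hlt : r (parent v) < r u :=
          lt_of_le_of_ne (hmin u hu) (fun h => hup' (hinj h).symm)
        have hu' : u ∈ N (parent v) :=
          hfill v (parent v) hp u hu (fun h => hup' h.symm) hlt
        have h1 : r v < r (parent v) := hup v (parent v) hp
        have hm : r u - r (parent v) < n := by omega
        exact Relation.TransGen.head ⟨hvr, rfl⟩ (ih _ hm (parent v) u hu' rfl)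
  -- descendant predicate
  set D := fun (v x : V) => x = v ∨ Relation.TransGen step x v with hD
  have hDstep : ∀ v a, Relation.TransGen step a v → a ≠ root ∧ D v (parent a) := by
    intro v a h
    obtain ⟨c, ⟨h1, h2⟩, h3⟩ := Relation.TransGen.head'_iff.mp h
    subst h2
    rcases Relation.reflTransGen_iff_eq_or_transGen.mp h3 with h4 | h4
    · exact ⟨h1, Or.inl h4.symm⟩
    · exact ⟨h1, Or.inr h4⟩
  -- Lemma B: neighbors of a descendant are descendants or in N v
  have lemB : ∀ n v a u, u ∈ N a → D v a → r u - r a = n → D v u ∨ u ∈ N v := by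
    intro n
    induction n using Nat.strong_induction_on with
    | _ n ih =>
      intro v a u hu hDa hn
      rcases hDa with rfl | hDa
      · exact Or.inr hu
      · obtain ⟨har, hDp⟩ := hDstep v a hDa
        obtain ⟨hp, hmin⟩ := hparent a har
        by_cases hup' : u = parent a
        · exact Or.inl (hup' ▸ hDp)
        · have hlt : r (parent a) < r u :=
            lt_of_le_of_ne (hmin u hu) (fun h => hup' (hinj h).symm)
          have hu' : u ∈ N (parent a) :=
            hfill a (parent a) hp u hu (fun h => hup' h.symm) hlt
          have h1 : r a < r (parent a) := hup a (parent a) hp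
          have hm : r u - r (parent a) < n := by omega
          exact ih _ hm v (parent a) u hu' hDp rfl
  -- crossing edge lemma
  have cross : ∀ v a b, adj a b → D v a → ¬ D v b → b ∈ N v := by
    intro v a b hab hDa hDb
    have hne' : a ≠ b := fun h => hDb (h ▸ hDa)
    rcases lt_or_ge (r a) (r b) with hlt | hle
    · have hb : b ∈ N a := horig a b hab hlt
      rcases lemB _ v a b hb hDa rfl with h | h
      · exact absurd h hDb
      · exact h
    · have hlt : r b < r a := lt_of_le_of_ne hle (fun h => hne' (hinj h.symm))
      have ha : a ∈ N b := horig b a (hadjsymm a b hab) hlt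
      have htg : Relation.TransGen step b a := anc _ b a ha rfl
      exfalso
      rcases hDa with rfl | hDa
      · exact hDb (Or.inr htg)
      · exact hDb (Or.inr (htg.trans hDa))
  -- conclude
  refine ⟨fun v u hu => anc _ v u hu rfl, fun v s t p => ?_⟩
  induction p generalizing s with
  | nil =>
    intro hs ht hchain
    have hadj : adj s t := by
      simpa using hchain.rel_head
    exact ⟨t, by simp, cross v s t hadj hs ht⟩
  | cons x p' ihp =>
    intro hs ht hchain
    have hadj : adj s x := by
      simpa using hchain.rel_head
    have hchain' : List.Chain' adj (x :: p' ++ [t]) := by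
      exact hchain.tail
    by_cases hx : D v x
    · obtain ⟨b, hb1, hb2⟩ := ihp x hx ht hchain'
      exact ⟨b, by simpa using Or.inr (by simpa using hb1), hb2⟩
    · exact ⟨x, by simp, cross v s x hadj hs hx⟩
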